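/- arXiv:math/0304063 — 3 statements merged into one kernel-verified Lean document; each statement's English description precedes it below -/
import Mathlib

section
/- Let A be a unital complex C*-algebra and let v₁, v₂ ∈ A be isometries, i.e. v₁*·v₁ = 1 and v₂*·v₂ = 1. Then the matrix w = [[1 − v₁v₁*, v₁v₂*],[v₂v₁*, 1 − v₂v₂*]] ∈ M₂(A) is a self-adjoint unitary (w* = w and w² = 1), and for every x ∈ A one has w · [[v₁ x v₁*, 0],[0, 0]] · w = [[0, 0],[0, v₂ x v₂*]]. -/
/-- Let `A` be a unital complex C*-algebra and `v₁, v₂ ∈ A` isometries, i.e. `v₁* v₁ = 1` and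
`v₂* v₂ = 1`. Then `w = [[1 − v₁v₁*, v₁v₂*],[v₂v₁*, 1 − v₂v₂*]] ∈ M₂(A)` is a self-adjoint
unitary (`w* = w` and `w² = 1`), and for every `x ∈ A` one has
`w * [[v₁ x v₁*, 0],[0, 0]] * w = [[0, 0],[0, v₂ x v₂*]]`. -/
theorem stmt_5 {A : Type*} [CStarAlgebra A] (v₁ v₂ : A)
    (h₁ : star v₁ * v₁ = 1) (h₂ : star v₂ * v₂ = 1) :
    star (!![1 - v₁ * star v₁, v₁ * star v₂; v₂ * star v₁, 1 - v₂ * star v₂] :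
        Matrix (Fin 2) (Fin 2) A) =
      !![1 - v₁ * star v₁, v₁ * star v₂; v₂ * star v₁, 1 - v₂ * star v₂] ∧
    (!![1 - v₁ * star v₁, v₁ * star v₂; v₂ * star v₁, 1 - v₂ * star v₂] :
        Matrix (Fin 2) (Fin 2) A) *
      !![1 - v₁ * star v₁, v₁ * star v₂; v₂ * star v₁, 1 - v₂ * star v₂] = 1 ∧
    ∀ x : A,
      !![1 - v₁ * star v₁, v₁ * star v₂; v₂ * star v₁, 1 - v₂ * star v₂] *
          !![v₁ * x * star v₁, 0; 0, 0] *
          !![1 - v₁ * star v₁, v₁ * star v₂; v₂ * star v₁, 1 - v₂ * star v₂] =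
        !![0, 0; 0, v₂ * x * star v₂] := by
  have k11 : v₁ * star v₁ * (v₁ * star v₁) = v₁ * star v₁ := by
    rw [mul_assoc, ← mul_assoc (star v₁), h₁, one_mul]
  have k22 : v₂ * star v₂ * (v₂ * star v₂) = v₂ * star v₂ := by
    rw [mul_assoc, ← mul_assoc (star v₂), h₂, one_mul]
  have k12 : v₁ * star v₂ * (v₂ * star v₁) = v₁ * star v₁ := by
    rw [mul_assoc, ← mul_assoc (star v₂), h₂, one_mul]
  have k21 : v₂ * star v₁ * (v₁ * star v₂) = v₂ * star v₂ := by
    rw [mul_assoc, ← mul_assoc (star v₁), h₁, one_mul]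
  have k1121 : v₁ * star v₁ * (v₁ * star v₂) = v₁ * star v₂ := by
    rw [mul_assoc, ← mul_assoc (star v₁), h₁, one_mul]
  have k2212 : v₂ * star v₂ * (v₂ * star v₁) = v₂ * star v₁ := by
    rw [mul_assoc, ← mul_assoc (star v₂), h₂, one_mul]
  have k1222 : v₁ * star v₂ * (v₂ * star v₂) = v₁ * star v₂ := by
    rw [mul_assoc, ← mul_assoc (star v₂), h₂, one_mul]
  have k2111 : v₂ * star v₁ * (v₁ * star v₁) = v₂ * star v₁ := by
    rw [mul_assoc, ← mul_assoc (star v₁), h₁, one_mul]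
  refine ⟨?_, ?_, ?_⟩
  · ext i j
    fin_cases i <;> fin_cases j <;>
      simp [Matrix.star_apply, star_sub, star_mul]
  · rw [Matrix.mul_fin_two, Matrix.one_fin_two]
    ext i j
    fin_cases i <;> fin_cases j <;>
      simp only [Matrix.cons_val', Matrix.cons_val_zero, Matrix.cons_val_one,
        Matrix.head_cons, Matrix.head_fin_const, Matrix.of_apply,
        Matrix.empty_val', Matrix.cons_val_fin_one, Fin.zero_eta, Fin.mk_one] <;>
      noncomm_ring [k11, k22, k12, k21, k1121, k2212, k1222, k2111]
  · intro x
    have key : ∀ t : A, star v₁ * (v₁ * t) = t := fun t => by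
      rw [← mul_assoc, h₁, one_mul]
    have l1 : v₁ * star v₁ * (v₁ * x * star v₁) = v₁ * x * star v₁ := by
      calc v₁ * star v₁ * (v₁ * x * star v₁) = v₁ * (star v₁ * v₁) * (x * star v₁) := by
            noncomm_ring
        _ = v₁ * x * star v₁ := by rw [h₁]; noncomm_ring
    have l2 : v₂ * star v₁ * (v₁ * x * star v₁) = v₂ * x * star v₁ := by
      calc v₂ * star v₁ * (v₁ * x * star v₁) = v₂ * (star v₁ * v₁) * (x * star v₁) := by
            noncomm_ring
        _ = v₂ * x * star v₁ := by rw [h₁]; noncomm_ring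
    have r1 : v₂ * x * star v₁ * (v₁ * star v₁) = v₂ * x * star v₁ := by
      calc v₂ * x * star v₁ * (v₁ * star v₁) = v₂ * x * (star v₁ * v₁) * star v₁ := by
            noncomm_ring
        _ = v₂ * x * star v₁ := by rw [h₁]; noncomm_ring
    have r2 : v₂ * x * star v₁ * (v₁ * star v₂) = v₂ * x * star v₂ := by
      calc v₂ * x * star v₁ * (v₁ * star v₂) = v₂ * x * (star v₁ * v₁) * star v₂ := by
            noncomm_ring
        _ = v₂ * x * star v₂ := by rw [h₁]; noncomm_ring
    have r3 : v₁ * x * star v₁ * (v₁ * star v₁) = v₁ * x * star v₁ := by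
      calc v₁ * x * star v₁ * (v₁ * star v₁) = v₁ * x * (star v₁ * v₁) * star v₁ := by
            noncomm_ring
        _ = v₁ * x * star v₁ := by rw [h₁]; noncomm_ring
    have r4 : v₁ * x * star v₁ * (v₁ * star v₂) = v₁ * x * star v₂ := by
      calc v₁ * x * star v₁ * (v₁ * star v₂) = v₁ * x * (star v₁ * v₁) * star v₂ := by
            noncomm_ring
        _ = v₁ * x * star v₂ := by rw [h₁]; noncomm_ring
    have l0 : v₁ * star v₁ * (v₁ * x * star v₁) - v₁ * x * star v₁ = 0 := by
      rw [l1, sub_self]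
    rw [Matrix.mul_fin_two, Matrix.mul_fin_two]
    ext i j
    fin_cases i <;> fin_cases j <;>
      simp only [Matrix.cons_val', Matrix.cons_val_zero, Matrix.cons_val_one,
        Matrix.head_cons, Matrix.head_fin_const, Matrix.of_apply,
        Matrix.empty_val', Matrix.cons_val_fin_one, Fin.zero_eta, Fin.mk_one] <;>
      noncomm_ring [l1, l2, r1, r2, r3, r4] <;>
      simp only [key] <;> abel
end

section
/- Let A and B be complex C*-algebras and let ψ : A → M₂(B) be a star-homomorphism whose (1,1)-component ψ₁₁ : A → B (where ψᵢⱼ(a) is the (i,j)-entry of ψ(a)) is itself multiplicative, i.e. ψ₁₁(ab) = ψ₁₁(a)ψ₁₁(b) for all a, b ∈ A. Then ψ₁₂(a) = 0 and ψ₂₁(a) = 0 for all a ∈ A, and ψ₂₂ : A → B is a star-homomorphism; consequently ψ(a) is the diagonal matrix diag(ψ₁₁(a), ψ₂₂(a)) for every a ∈ A. -/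
/-- Let `A` and `B` be complex C*-algebras and `ψ : A → M₂(B)` a star-homomorphism whose
`(1,1)`-component `ψ₁₁ : A → B` is itself multiplicative. Then `ψ₁₂ a = 0` and `ψ₂₁ a = 0`
for all `a ∈ A`, and `ψ₂₂ : A → B` is a star-homomorphism (multiplicative and ∗-preserving);
consequently `ψ a` is the diagonal matrix `diag (ψ₁₁ a, ψ₂₂ a)` for every `a ∈ A`. -/
theorem stmt_8 {A B : Type*} [NonUnitalCStarAlgebra A] [NonUnitalCStarAlgebra B]
    (ψ : A →⋆ₙₐ[ℂ] Matrix (Fin 2) (Fin 2) B)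
    (hmul : ∀ a b : A, ψ (a * b) 0 0 = ψ a 0 0 * ψ b 0 0) :
    (∀ a : A, ψ a 0 1 = 0 ∧ ψ a 1 0 = 0) ∧
    (∀ a b : A, ψ (a * b) 1 1 = ψ a 1 1 * ψ b 1 1) ∧
    (∀ a : A, ψ (star a) 1 1 = star (ψ a 1 1)) ∧
    (∀ a : A, ψ a = !![ψ a 0 0, 0; 0, ψ a 1 1]) := by
  have hstar : ∀ (a : A) (i j : Fin 2), ψ (star a) i j = star (ψ a j i) := by
    intro a i j
    rw [map_star]
    rfl
  have h0 : ∀ a b : A, ψ a 0 1 * ψ b 1 0 = 0 := by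
    intro a b
    have h := hmul a b
    rw [map_mul, Matrix.mul_apply, Fin.sum_univ_two] at h
    exact add_eq_left.mp h
  have h01 : ∀ a : A, ψ a 0 1 = 0 := by
    intro a
    have := h0 a (star a)
    rw [hstar] at this
    exact CStarRing.mul_star_self_eq_zero_iff _ |>.mp this
  have h10 : ∀ a : A, ψ a 1 0 = 0 := by
    intro a
    have : ψ a 1 0 = star (ψ (star a) 0 1) := by rw [hstar, star_star]
    rw [this, h01, star_zero]
  refine ⟨fun a => ⟨h01 a, h10 a⟩, ?_, fun a => hstar a 1 1, ?_⟩
  · intro a b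
    rw [map_mul, Matrix.mul_apply, Fin.sum_univ_two, h10 a, zero_mul, zero_add]
  · intro a
    ext i j
    fin_cases i <;> fin_cases j <;>
      simp [h01 a, h10 a]
end

section
/- Let A and B be complex C*-algebras, let I ⊆ B be a closed two-sided ideal, and let ψ : A → M₂(B) be a star-homomorphism with components ψᵢⱼ (the (i,j)-entries of ψ). Suppose x ∈ B satisfies x·ψ₁₁(a) ∈ I and ψ₁₁(a)·x ∈ I for all a ∈ A. Then x·ψ₁₂(a) ∈ I and ψ₂₁(a)·x ∈ I for all a ∈ A. -/
open Filter Topology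

section Hereditary

variable {B : Type*} [NonUnitalCStarAlgebra B]

/-- Bound on the real quasispectrum by the norm. -/
lemma quasi_abs_le (a : B) {s : ℝ} (hs : s ∈ quasispectrum ℝ a) : |s| ≤ ‖a‖ := by
  rw [Unitization.quasispectrum_eq_spectrum_inr' ℝ ℂ a] at hs
  simpa [Unitization.norm_inr, Real.norm_eq_abs] using
    spectrum.norm_le_norm_of_mem hs

lemma numeric_bound {R s : ℝ} (hR : 0 < R) (habs : |s| ≤ R) (N : ℕ) (hN : 0 < N) :
    |s * (1 - (2 * R ^ 2)⁻¹ * s ^ 2) ^ (2 * N)| ≤ R / (2 * Real.sqrt N) := by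
  have hR2 : (0:ℝ) < 2 * R ^ 2 := by positivity
  set t : ℝ := (2 * R ^ 2)⁻¹ * s ^ 2 with ht
  have ht0 : 0 ≤ t := by positivity
  have hs2 : s ^ 2 ≤ R ^ 2 := by
    rw [← sq_abs]; exact pow_le_pow_left₀ (abs_nonneg s) habs 2
  have ht1 : t ≤ 1 / 2 := by
    rw [ht]
    rw [inv_mul_le_iff₀ hR2]
    nlinarith
  have h1t : (0:ℝ) ≤ 1 - t := by linarith
  have hb1 : (1 - t) ^ (2 * N) ≤ 1 / (1 + (2 * N) * t) := by
    have hpos : 0 < 1 + (2 * N : ℝ) * t := by positivity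
    rw [le_div_iff₀ hpos]
    have key : (1 - t) ^ (2 * N) * (1 + t) ^ (2 * N) ≤ 1 := by
      rw [← mul_pow]
      have h2 : (1 - t) * (1 + t) = 1 - t ^ 2 := by ring
      rw [h2]
      exact pow_le_one₀ (by nlinarith) (by nlinarith)
    have hbern : 1 + (2 * N : ℝ) * t ≤ (1 + t) ^ (2 * N) := by
      have h3 := one_add_mul_le_pow (a := t) (by linarith) (2 * N)
      calc (1:ℝ) + (2 * N) * t = 1 + ((2 * N : ℕ) : ℝ) * t := by push_cast; ring
        _ ≤ (1 + t) ^ (2 * N) := h3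
    calc (1 - t) ^ (2 * N) * (1 + (2 * N : ℝ) * t)
        ≤ (1 - t) ^ (2 * N) * (1 + t) ^ (2 * N) :=
          mul_le_mul_of_nonneg_left hbern (pow_nonneg h1t _)
      _ ≤ 1 := key
  have habs2 : |s * (1 - t) ^ (2 * N)| = |s| * (1 - t) ^ (2 * N) := by
    rw [abs_mul, abs_pow, abs_of_nonneg h1t]
  rw [habs2]
  have hsqN : Real.sqrt N ^ 2 = N := Real.sq_sqrt (by positivity)
  have hsqpos : 0 < Real.sqrt N := Real.sqrt_pos.mpr (by positivity)
  have h1 : |s| * (1 - t) ^ (2 * N) ≤ |s| * (1 / (1 + (2 * N) * t)) :=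
    mul_le_mul_of_nonneg_left hb1 (abs_nonneg s)
  refine h1.trans ?_
  rw [mul_one_div, div_le_div_iff₀ (by positivity) (by positivity)]
  have ht' : (2 * N : ℝ) * t * R ^ 2 = N * s ^ 2 := by
    rw [ht]; field_simp
  -- |s| * 2√N * R² ≤ R (1 + 2Nt) R² = R³ + R N s²
  have hkey : |s| * (2 * Real.sqrt N) * R ^ 2 ≤ R * (1 + (2 * N : ℝ) * t) * R ^ 2 := by
    have expand : R * (1 + (2 * N : ℝ) * t) * R ^ 2 = R ^ 3 + R * (N * s ^ 2) := by
      linear_combination R * ht'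
    rw [expand]
    have h4 : (Real.sqrt N * |s|) ^ 2 = N * s ^ 2 := by
      rw [mul_pow, hsqN, sq_abs]
    nlinarith [mul_nonneg hR.le (sq_nonneg (R - Real.sqrt N * |s|)), h4]
  have hR2' : (0:ℝ) < R ^ 2 := by positivity
  exact le_of_mul_le_mul_right (by linarith [hkey]) hR2'

/-- Key approximation: for selfadjoint `a` there are elements `b = a * w` which are
approximately units for `a`. -/
lemma key_approx (a : B) (ha : IsSelfAdjoint a) (n : ℕ) :
    ∃ b : B, (∃ w : B, b = a * w) ∧ IsSelfAdjoint b ∧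
      ‖a - b * a - (a * b - b * (a * b))‖ ≤ (‖a‖ + 1) / (2 * Real.sqrt (n + 1)) := by
  set R : ℝ := ‖a‖ + 1 with hR
  have hR0 : 0 < R := by positivity
  set c : ℝ := (2 * R ^ 2)⁻¹ with hc
  have hc0 : 0 < c := by positivity
  set N : ℕ := n + 1 with hN
  set f : ℝ → ℝ := fun s => 1 - (1 - c * s ^ 2) ^ N with hf
  set g : ℝ → ℝ := fun s => s * (c * ∑ k ∈ Finset.range N, (1 - c * s ^ 2) ^ k) with hg
  have hfg : ∀ s, f s = s * g s := by
    intro s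
    have h := geom_sum_mul (1 - c * s ^ 2) N
    simp only [hf, hg]
    linear_combination h
  have hgcont : Continuous g := by
    apply Continuous.mul continuous_id
    apply Continuous.mul continuous_const
    exact continuous_finset_sum _ (fun k _ => by fun_prop)
  have hfcont : Continuous f := by fun_prop
  have hf0 : f 0 = 0 := by simp [hf]
  have hg0 : g 0 = 0 := by simp [hg]
  set b : B := cfcₙ f a with hb
  have hbf : b = a * cfcₙ g a := by
    have h1 : f = fun s => (id s : ℝ) * g s := funext hfg
    rw [hb, h1, cfcₙ_mul id g a (continuous_id.continuousOn) rfl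
      hgcont.continuousOn hg0, cfcₙ_id ℝ a]
  have hbsa : IsSelfAdjoint b := cfcₙ_predicate f a
  refine ⟨b, ⟨cfcₙ g a, hbf⟩, hbsa, ?_⟩
  -- rewrite the expression as cfcₙ of a single function
  have e1 : cfcₙ (fun s => f s * id s) a = b * a := by
    rw [cfcₙ_mul f id a (hfcont.continuousOn) hf0 (continuous_id.continuousOn) rfl,
      cfcₙ_id ℝ a]
  have e2 : cfcₙ (fun s => id s * f s) a = a * b := by
    rw [cfcₙ_mul id f a (continuous_id.continuousOn) rfl (hfcont.continuousOn) hf0,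
      cfcₙ_id ℝ a]
  have e3 : cfcₙ (fun s => f s * (id s * f s)) a = b * (a * b) := by
    rw [cfcₙ_mul f (fun s => id s * f s) a (hfcont.continuousOn) hf0
      ((by fun_prop : Continuous fun s : ℝ => id s * f s).continuousOn) (by simp [hf0]), e2]
  have e4 : cfcₙ (fun s => id s * f s - f s * (id s * f s)) a = a * b - b * (a * b) := by
    rw [cfcₙ_sub (fun s => id s * f s) (fun s => f s * (id s * f s)) a
      ((by fun_prop : Continuous fun s : ℝ => id s * f s).continuousOn) (by simp [hf0])
      ((by fun_prop : Continuous fun s : ℝ => f s * (id s * f s)).continuousOn) (by simp [hf0]),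
      e2, e3]
  have e5 : cfcₙ (fun s => id s - f s * id s) a = a - b * a := by
    rw [cfcₙ_sub id (fun s => f s * id s) a (continuous_id.continuousOn) rfl
      ((by fun_prop : Continuous fun s : ℝ => f s * id s).continuousOn) (by simp [hf0]),
      cfcₙ_id ℝ a, e1]
  have E : cfcₙ (fun s => (id s - f s * id s) - (id s * f s - f s * (id s * f s))) a
      = a - b * a - (a * b - b * (a * b)) := by
    rw [cfcₙ_sub (fun s => id s - f s * id s) (fun s => id s * f s - f s * (id s * f s)) a
      ((by fun_prop : Continuous fun s : ℝ => id s - f s * id s).continuousOn) (by simp [hf0])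
      ((by fun_prop : Continuous fun s : ℝ => id s * f s - f s * (id s * f s)).continuousOn)
      (by simp [hf0]), e5, e4]
  rw [← E]
  -- now the norm bound
  apply norm_cfcₙ_le
  intro s hs
  have habs : |s| ≤ R := (quasi_abs_le a hs).trans (by simp [hR])
  have hFval : (id s - f s * id s) - (id s * f s - f s * (id s * f s))
      = s * (1 - c * s ^ 2) ^ (2 * N) := by
    simp only [hf, id]
    ring
  rw [hFval, Real.norm_eq_abs]
  have hend := numeric_bound hR0 habs N (by omega)
  calc |s * (1 - c * s ^ 2) ^ (2 * N)| ≤ R / (2 * Real.sqrt N) := by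
        simpa [hc] using hend
    _ = (‖a‖ + 1) / (2 * Real.sqrt (n + 1)) := by rw [hR, hN]; norm_num

end Hereditary

section Hereditary2

variable {B : Type*} [NonUnitalCStarAlgebra B]

lemma tendsto_bound {C : ℝ} : Tendsto (fun n : ℕ => Real.sqrt ((C + 1) / (2 * Real.sqrt (n + 1))))
    atTop (𝓝 0) := by
  have h1 : Tendsto (fun n : ℕ => Real.sqrt ((n : ℝ) + 1)) atTop atTop := by
    rw [tendsto_atTop_atTop]
    intro bnd
    obtain ⟨m, hm⟩ := exists_nat_ge (bnd ^ 2)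
    refine ⟨m, fun n hn => ?_⟩
    have hb : bnd ≤ Real.sqrt (bnd ^ 2) := by
      rw [Real.sqrt_sq_eq_abs]; exact le_abs_self bnd
    refine hb.trans (Real.sqrt_le_sqrt ?_)
    have hmn : (m : ℝ) ≤ n := by exact_mod_cast hn
    linarith
  have h2 : Tendsto (fun n : ℕ => 2 * Real.sqrt ((n : ℝ) + 1)) atTop atTop :=
    h1.const_mul_atTop' (by norm_num)
  have h3 : Tendsto (fun n : ℕ => (C + 1) / (2 * Real.sqrt ((n : ℝ) + 1))) atTop (𝓝 0) :=
    tendsto_const_nhds.div_atTop h2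
  simpa [Real.sqrt_zero] using h3.sqrt

lemma mem_of_mul_star_self_mem (I : TwoSidedIdeal B) (hI : IsClosed (I : Set B)) {y : B}
    (h : y * star y ∈ I) : y ∈ I := by
  set a : B := y * star y with hadef
  have ha : IsSelfAdjoint a := IsSelfAdjoint.mul_star_self y
  choose b hbw hbsa hbnd using key_approx a ha
  have hmem : ∀ n, b n * y ∈ I := by
    intro n
    obtain ⟨w, hw⟩ := hbw n
    rw [hw]
    exact I.mul_mem_right _ _ (I.mul_mem_right _ _ h)
  have hnorm : ∀ n, ‖y - b n * y‖ ≤ Real.sqrt ((‖a‖ + 1) / (2 * Real.sqrt (n + 1))) := by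
    intro n
    set z := y - b n * y with hz
    have hzz : z * star z = a - b n * a - (a * b n - b n * (a * b n)) := by
      have hb' : star (b n) = b n := (hbsa n).star_eq
      rw [hz, hadef]
      simp only [star_sub, star_mul, hb']
      noncomm_ring
    have h2 : ‖z‖ * ‖z‖ ≤ (‖a‖ + 1) / (2 * Real.sqrt (n + 1)) := by
      calc ‖z‖ * ‖z‖ = ‖z * star z‖ := (CStarRing.norm_self_mul_star).symm
        _ = ‖a - b n * a - (a * b n - b n * (a * b n))‖ := by rw [hzz]
        _ ≤ _ := hbnd n
    rw [Real.le_sqrt (norm_nonneg z) (by positivity)]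
    rw [sq]
    exact h2
  have hlim : Tendsto (fun n => b n * y) atTop (𝓝 y) := by
    rw [tendsto_iff_norm_sub_tendsto_zero]
    apply squeeze_zero (fun n => norm_nonneg _)
      (fun n => by rw [norm_sub_rev]; exact hnorm n) (tendsto_bound (C := ‖a‖))
  have : y ∈ closure (I : Set B) :=
    mem_closure_of_tendsto hlim (Filter.Eventually.of_forall hmem)
  rwa [hI.closure_eq] at this

lemma mem_of_star_mul_self_mem (I : TwoSidedIdeal B) (hI : IsClosed (I : Set B)) {y : B}
    (h : star y * y ∈ I) : y ∈ I := by
  set a : B := star y * y with hadef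
  have ha : IsSelfAdjoint a := IsSelfAdjoint.star_mul_self y
  choose b hbw hbsa hbnd using key_approx a ha
  have hmem : ∀ n, y * b n ∈ I := by
    intro n
    obtain ⟨w, hw⟩ := hbw n
    rw [hw, ← mul_assoc]
    exact I.mul_mem_right _ _ (I.mul_mem_left _ _ h)
  have hnorm : ∀ n, ‖y - y * b n‖ ≤ Real.sqrt ((‖a‖ + 1) / (2 * Real.sqrt (n + 1))) := by
    intro n
    set z := y - y * b n with hz
    have hzz : star z * z = a - b n * a - (a * b n - b n * (a * b n)) := by
      have hb' : star (b n) = b n := (hbsa n).star_eq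
      rw [hz, hadef]
      simp only [star_sub, star_mul, hb']
      noncomm_ring
    have h2 : ‖z‖ * ‖z‖ ≤ (‖a‖ + 1) / (2 * Real.sqrt (n + 1)) := by
      calc ‖z‖ * ‖z‖ = ‖star z * z‖ := (CStarRing.norm_star_mul_self).symm
        _ = ‖a - b n * a - (a * b n - b n * (a * b n))‖ := by rw [hzz]
        _ ≤ _ := hbnd n
    rw [Real.le_sqrt (norm_nonneg z) (by positivity)]
    rw [sq]
    exact h2
  have hlim : Tendsto (fun n => y * b n) atTop (𝓝 y) := by
    rw [tendsto_iff_norm_sub_tendsto_zero]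
    apply squeeze_zero (fun n => norm_nonneg _)
      (fun n => by rw [norm_sub_rev]; exact hnorm n) (tendsto_bound (C := ‖a‖))
  have : y ∈ closure (I : Set B) :=
    mem_closure_of_tendsto hlim (Filter.Eventually.of_forall hmem)
  rwa [hI.closure_eq] at this

end Hereditary2

/-- Let `A` and `B` be complex C*-algebras, `I ⊆ B` a closed two-sided ideal, and
`ψ : A → M₂(B)` a star-homomorphism with components `ψᵢⱼ`. Suppose `x ∈ B` satisfies
`x * ψ₁₁ a ∈ I` and `ψ₁₁ a * x ∈ I` for all `a ∈ A`. Then `x * ψ₁₂ a ∈ I` and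
`ψ₂₁ a * x ∈ I` for all `a ∈ A`. -/
theorem stmt_9 {A B : Type*} [NonUnitalCStarAlgebra A] [NonUnitalCStarAlgebra B]
    (I : TwoSidedIdeal B) (hI : IsClosed (I : Set B))
    (ψ : A →⋆ₙₐ[ℂ] Matrix (Fin 2) (Fin 2) B) (x : B)
    (hx : ∀ a : A, x * ψ a 0 0 ∈ I ∧ ψ a 0 0 * x ∈ I) :
    ∀ a : A, x * ψ a 0 1 ∈ I ∧ ψ a 1 0 * x ∈ I := by
  intro a
  constructor
  · apply mem_of_mul_star_self_mem I hI
    have hstar : star (ψ a 0 1) = ψ (star a) 1 0 := by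
      rw [map_star ψ a, Matrix.star_apply]
    have hprod : ψ a 0 1 * ψ (star a) 1 0
        = ψ (a * star a) 0 0 - ψ a 0 0 * ψ (star a) 0 0 := by
      have h00 : ψ (a * star a) 0 0 = (ψ a * ψ (star a)) 0 0 := by
        rw [map_mul]
      rw [h00, Matrix.mul_apply, Fin.sum_univ_two]
      abel
    have key : (x * ψ a 0 1) * star (x * ψ a 0 1)
        = x * ψ (a * star a) 0 0 * star x - (x * ψ a 0 0) * (ψ (star a) 0 0 * star x) := by
      rw [star_mul, hstar]
      calc x * ψ a 0 1 * (ψ (star a) 1 0 * star x)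
          = x * (ψ a 0 1 * ψ (star a) 1 0) * star x := by noncomm_ring
        _ = x * (ψ (a * star a) 0 0 - ψ a 0 0 * ψ (star a) 0 0) * star x := by rw [hprod]
        _ = _ := by noncomm_ring
    rw [key]
    exact I.sub_mem (I.mul_mem_right _ _ (hx (a * star a)).1)
      (I.mul_mem_right _ _ (hx a).1)
  · apply mem_of_star_mul_self_mem I hI
    have hstar : star (ψ a 1 0) = ψ (star a) 0 1 := by
      rw [map_star ψ a, Matrix.star_apply]
    have hprod : ψ (star a) 0 1 * ψ a 1 0
        = ψ (star a * a) 0 0 - ψ (star a) 0 0 * ψ a 0 0 := by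
      have h00 : ψ (star a * a) 0 0 = (ψ (star a) * ψ a) 0 0 := by
        rw [map_mul]
      rw [h00, Matrix.mul_apply, Fin.sum_univ_two]
      abel
    have key : star (ψ a 1 0 * x) * (ψ a 1 0 * x)
        = star x * (ψ (star a * a) 0 0 * x) - (star x * ψ (star a) 0 0) * (ψ a 0 0 * x) := by
      rw [star_mul, hstar]
      calc star x * ψ (star a) 0 1 * (ψ a 1 0 * x)
          = star x * (ψ (star a) 0 1 * ψ a 1 0) * x := by noncomm_ring
        _ = star x * (ψ (star a * a) 0 0 - ψ (star a) 0 0 * ψ a 0 0) * x := by rw [hprod]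
        _ = _ := by noncomm_ring
    rw [key]
    exact I.sub_mem (I.mul_mem_left _ _ (hx (star a * a)).2)
      (I.mul_mem_left _ _ (hx a).2)
end
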